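/- Let D be a triangulated category with a bounded t-structure with heart H, and let (T, F) be a torsion pair on H. Then the full subcategory K = ⟨F[1], T⟩, consisting of objects x fitting into an exact triangle f[1] → x → t → f[2] with f ∈ F and t ∈ T, is the heart of a bounded t-structure on D. -/

import Mathlib

open CategoryTheory Limits Pretriangulated Triangulated

variable (D : Type*) [Category D] [Preadditive D] [HasZeroObject D] [HasShift D ℤ]
  [∀ n : ℤ, (shiftFunctor D n).Additive] [Pretriangulated D]

/-- The heart of a t-structure, as a set of objects. -/
def heartSet {D : Type*} [Category D] [Preadditive D] [HasZeroObject D] [HasShift D ℤ]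
    [∀ n : ℤ, (shiftFunctor D n).Additive] [Pretriangulated D]
    (t : TStructure D) : Set D :=
  {X | t.le 0 X ∧ t.ge 0 X}

/-- A t-structure is bounded if every object lies in `D^{≥ a} ∩ D^{≤ b}` for some `a, b`. -/
def TStructureIsBounded {D : Type*} [Category D] [Preadditive D] [HasZeroObject D]
    [HasShift D ℤ] [∀ n : ℤ, (shiftFunctor D n).Additive] [Pretriangulated D]
    (t : TStructure D) : Prop :=
  ∀ X : D, ∃ a b : ℤ, t.ge a X ∧ t.le b X

/-- A torsion pair `(T, F)` on the heart of a t-structure `t`: both classes lie in the heart,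
`Hom(T, F) = 0`, and every object of the heart is an extension (a distinguished triangle)
of a torsion-free object by a torsion object. -/
structure IsHeartTorsionPair {D : Type*} [Category D] [Preadditive D] [HasZeroObject D]
    [HasShift D ℤ] [∀ n : ℤ, (shiftFunctor D n).Additive] [Pretriangulated D]
    (t : TStructure D) (T F : Set D) : Prop where
  subset_T : T ⊆ heartSet t
  subset_F : F ⊆ heartSet t
  hom_zero : ∀ ⦃a b : D⦄, a ∈ T → b ∈ F → ∀ f : a ⟶ b, f = 0
  decomp : ∀ h ∈ heartSet t, ∃ (a b : D) (_ : a ∈ T) (_ : b ∈ F) (f : a ⟶ h)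
    (g : h ⟶ b) (w : b ⟶ a⟦(1 : ℤ)⟧), Triangle.mk f g w ∈ distTriang D

/-- The Happel–Reiten–Smalø tilt `K = ⟨F[1], T⟩`: objects `x` fitting into an exact triangle
`f[1] → x → t → f[2]` with `f ∈ F` and `t ∈ T`. -/
def tiltSet {D : Type*} [Category D] [Preadditive D] [HasZeroObject D] [HasShift D ℤ]
    [∀ n : ℤ, (shiftFunctor D n).Additive] [Pretriangulated D]
    (T F : Set D) : Set D :=
  {x | ∃ (yF yT : D) (_ : yF ∈ F) (_ : yT ∈ T) (α : yF⟦(1 : ℤ)⟧ ⟶ x) (β : x ⟶ yT)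
    (γ : yT ⟶ yF⟦(1 : ℤ)⟧⟦(1 : ℤ)⟧), Triangle.mk α β γ ∈ distTriang D}

section HRSHelpers

variable {D}

lemma hrs_zero_of_lt (t : TStructure D) {a b : ℤ} (hab : a < b) {X Y : D}
    (hX : t.le a X) (hY : t.ge b Y) (f : X ⟶ Y) : f = 0 := by
  have h1 : t.le 0 (X⟦a⟧) := t.le_shift a a 0 (add_zero a) X hX
  have h2 : t.ge (b - a) (Y⟦a⟧) := t.ge_shift b a (b - a) (by omega) Y hY
  have h3 : t.ge 1 (Y⟦a⟧) := t.ge_antitone (by omega) _ h2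
  have h4 : (shiftFunctor D a).map f = 0 := t.zero' _ h1 h3
  exact (shiftFunctor D a).map_injective (by simpa using h4)

lemma hrs_le_of_orth (t : TStructure D) (n : ℤ) (X : D)
    (h : ∀ (V : D), t.ge (n + 1) V → ∀ f : X ⟶ V, f = 0) : t.le n X := by
  obtain ⟨W, V, hW, hV, f, g, w, hT⟩ := t.exists_triangle X n (n + 1) rfl
  have hzV : IsZero V := by
    rw [IsZero.iff_id_eq_zero]
    obtain ⟨r, hr⟩ := Triangle.yoneda_exact₃ _ hT (𝟙 V)
      (by dsimp [Triangle.mk, Triangle.rotate, Triangle.invRotate]; rw [Category.comp_id]; exact h V hV g)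
    have hr0 : r = 0 := hrs_zero_of_lt t (show n - 1 < n + 1 by omega)
      (t.le_shift n 1 (n - 1) (by omega) W hW) hV r
    rw [hr, hr0, comp_zero]; rfl
  have : IsIso f := (Triangle.isZero₃_iff_isIso₁ _ hT).1 hzV
  exact ObjectProperty.prop_of_iso (t.le n) (asIso f) hW

lemma hrs_ge_of_orth (t : TStructure D) (n : ℤ) (Y : D)
    (h : ∀ (W : D), t.le (n - 1) W → ∀ f : W ⟶ Y, f = 0) : t.ge n Y := by
  obtain ⟨W, V, hW, hV, f, g, w, hT⟩ := t.exists_triangle Y (n - 1) n (by omega)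
  have hzW : IsZero W := by
    rw [IsZero.iff_id_eq_zero]
    obtain ⟨r, hr⟩ := Triangle.coyoneda_exact₂ _ (inv_rot_of_distTriang _ hT) (𝟙 W)
      (by dsimp [Triangle.mk, Triangle.rotate, Triangle.invRotate]; rw [Category.id_comp]; exact h W hW f)
    have hr0 : r = 0 := hrs_zero_of_lt t (show n - 1 < n + 1 by omega) hW
      (t.ge_shift n (-1) (n + 1) (by omega) V hV) r
    rw [hr, hr0, zero_comp]; rfl
  have : IsIso g := (Triangle.isZero₁_iff_isIso₂ _ hT).1 hzW
  exact ObjectProperty.prop_of_iso (t.ge n) (asIso g).symm hV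

lemma hrs_le_ext (t : TStructure D) (n : ℤ) (T : Triangle D) (hT : T ∈ distTriang D)
    (h₁ : t.le n T.obj₁) (h₃ : t.le n T.obj₃) : t.le n T.obj₂ := by
  refine hrs_le_of_orth t n _ (fun V hV f => ?_)
  obtain ⟨g, hg⟩ := Triangle.yoneda_exact₂ _ hT f
    (hrs_zero_of_lt t (lt_add_one n) h₁ hV _)
  rw [hg, hrs_zero_of_lt t (lt_add_one n) h₃ hV g, comp_zero]

lemma hrs_ge_ext (t : TStructure D) (n : ℤ) (T : Triangle D) (hT : T ∈ distTriang D)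
    (h₁ : t.ge n T.obj₁) (h₃ : t.ge n T.obj₃) : t.ge n T.obj₂ := by
  refine hrs_ge_of_orth t n _ (fun W hW f => ?_)
  obtain ⟨g, hg⟩ := Triangle.coyoneda_exact₂ _ hT f
    (hrs_zero_of_lt t (show n - 1 < n by omega) hW h₃ _)
  rw [hg, hrs_zero_of_lt t (show n - 1 < n by omega) hW h₁ g, zero_comp]

/-- The aisle of the HRS tilt. -/
def hrsP (t : TStructure D) (F : Set D) : Set D :=
  {X | t.le 0 X ∧ ∀ f ∈ F, ∀ φ : X ⟶ f, φ = 0}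

/-- The co-aisle of the HRS tilt: the right orthogonal of `hrsP`. -/
def hrsQ (t : TStructure D) (F : Set D) : Set D :=
  {Y | ∀ Z ∈ hrsP t F, ∀ φ : Z ⟶ Y, φ = 0}

variable {t : TStructure D} {T F : Set D}

lemma hrsP_iso {X Y : D} (e : X ≅ Y) (hX : X ∈ hrsP t F) : Y ∈ hrsP t F := by
  refine ⟨ObjectProperty.prop_of_iso (t.le 0) e hX.1, fun f hf φ => ?_⟩
  have h0 : e.hom ≫ φ = 0 := hX.2 f hf _
  calc φ = e.inv ≫ (e.hom ≫ φ) := by simp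
  _ = 0 := by rw [h0, comp_zero]

lemma hrsQ_iso {X Y : D} (e : X ≅ Y) (hX : X ∈ hrsQ t F) : Y ∈ hrsQ t F := by
  intro Z hZ φ
  have h0 : φ ≫ e.inv = 0 := hX Z hZ _
  calc φ = (φ ≫ e.inv) ≫ e.hom := by simp
  _ = 0 := by rw [h0, zero_comp]

lemma hrsP_shift (hF : F ⊆ heartSet t) {X : D} (hX : X ∈ hrsP t F) :
    X⟦(1 : ℤ)⟧ ∈ hrsP t F := by
  have h1 : t.le (-1) (X⟦(1 : ℤ)⟧) := t.le_shift 0 1 (-1) (by omega) X hX.1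
  exact ⟨t.le_monotone (show (-1:ℤ) ≤ 0 by omega) _ h1,
    fun f hf φ => hrs_zero_of_lt t (show (-1:ℤ) < 0 by omega) h1 (hF hf).2 φ⟩

lemma hrsQ_shift_neg (hF : F ⊆ heartSet t) {Y : D} (hY : Y ∈ hrsQ t F) :
    Y⟦(-1 : ℤ)⟧ ∈ hrsQ t F := by
  intro Z hZ φ
  have hZ1 : Z⟦(1 : ℤ)⟧ ∈ hrsP t F := hrsP_shift hF hZ
  have h0 : (shiftFunctor D (1:ℤ)).map φ ≫ ((shiftEquiv D (1:ℤ)).counitIso.app Y).hom = 0 :=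
    hY _ hZ1 _
  have h1 : (shiftFunctor D (1:ℤ)).map φ = 0 := by
    have := h0 =≫ ((shiftEquiv D (1:ℤ)).counitIso.app Y).inv
    erw [Category.assoc, Iso.hom_inv_id, Category.comp_id, zero_comp] at this; exact this
  exact (shiftFunctor D (1:ℤ)).map_injective (by simpa using h1)

lemma hrsT_sub (htf : IsHeartTorsionPair t T F) {a : D} (ha : a ∈ T) : a ∈ hrsP t F :=
  ⟨(htf.subset_T ha).1, fun f hf φ => htf.hom_zero ha hf φ⟩

/-- The key truncation triangle for the tilted t-structure. -/
lemma hrs_exists_tri (htf : IsHeartTorsionPair t T F) (A : D) :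
    ∃ (X Y : D) (_ : X ∈ hrsP t F) (_ : Y ∈ hrsQ t F) (f : X ⟶ A) (g : A ⟶ Y)
      (h : Y ⟶ X⟦(1 : ℤ)⟧), Triangle.mk f g h ∈ distTriang D := by
  obtain ⟨B, C, hB, hC, u, v, w, hBA⟩ := t.exists_triangle A 0 1 (by omega)
  obtain ⟨B', h, hB', hhGE, f₂, g₂, δ, hT₂⟩ := t.exists_triangle B (-1) 0 (by omega)
  have hB'm2 : t.le (-2) (B'⟦(1:ℤ)⟧) := t.le_shift (-1) 1 (-2) (by omega) B' hB'
  have hhLE : t.le 0 h := hrs_le_ext t 0 _ (rot_of_distTriang _ hT₂) hB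
    (t.le_monotone (show (-2:ℤ) ≤ 0 by omega) _ hB'm2)
  obtain ⟨a, b, ha, hb, i, p, wb, hTt⟩ := htf.decomp h ⟨hhLE, hhGE⟩
  obtain ⟨X, f₁, g₁, hT₁⟩ := distinguished_cocone_triangle₂ (i ≫ δ)
  have haLE : t.le 0 a := (htf.subset_T ha).1
  have hXP : X ∈ hrsP t F := by
    refine ⟨hrs_le_ext t 0 _ hT₁ (t.le_monotone (show (-1:ℤ) ≤ 0 by omega) _ hB') haLE,
      fun f hf φ => ?_⟩
    obtain ⟨g, hg⟩ := Triangle.yoneda_exact₂ _ hT₁ φ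
      (hrs_zero_of_lt t (show (-1:ℤ) < 0 by omega) hB' (htf.subset_F hf).2 _)
    erw [hg, htf.hom_zero ha hf g, comp_zero]; rfl
  -- construct q : X ⟶ B
  obtain ⟨c, hc₁, hc₂⟩ := complete_distinguished_triangle_morphism _ _
    (rot_of_distTriang _ (rot_of_distTriang _ hT₁))
    (rot_of_distTriang _ (rot_of_distTriang _ hT₂)) i (𝟙 _)
    (by dsimp [Triangle.mk, Triangle.rotate, Triangle.invRotate]; rw [Category.comp_id])
  set q : X ⟶ B := (shiftFunctor D (1:ℤ)).preimage c with hqdef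
  have hqc : (shiftFunctor D (1:ℤ)).map q = c := Functor.map_preimage _ _
  have hc₁' : (shiftFunctor D (1:ℤ)).map f₁ ≫ c = (shiftFunctor D (1:ℤ)).map f₂ := by
    dsimp [Triangle.mk, Triangle.rotate, Triangle.invRotate] at hc₁
    erw [Preadditive.neg_comp, Category.id_comp] at hc₁
    exact neg_injective hc₁
  have hc₂' : (shiftFunctor D (1:ℤ)).map g₁ ≫ (shiftFunctor D (1:ℤ)).map i =
      c ≫ (shiftFunctor D (1:ℤ)).map g₂ := by
    dsimp [Triangle.mk, Triangle.rotate, Triangle.invRotate] at hc₂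
    erw [Preadditive.neg_comp, Preadditive.comp_neg] at hc₂
    exact neg_injective hc₂
  have hq1 : f₁ ≫ q = f₂ := (shiftFunctor D (1:ℤ)).map_injective
    (by rw [Functor.map_comp, hqc]; exact hc₁')
  have hq2 : g₁ ≫ i = q ≫ g₂ := (shiftFunctor D (1:ℤ)).map_injective
    (by rw [Functor.map_comp, Functor.map_comp, hqc]; exact hc₂')
  obtain ⟨Y, vY, wY, hTY⟩ := distinguished_cocone_triangle (q ≫ u)
  have hYQ : Y ∈ hrsQ t F := by
    rintro Z ⟨hZLE, hZF⟩ ψ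
    have hβφ : (ψ ≫ wY) ≫ (shiftFunctor D (1:ℤ)).map (q ≫ u) = 0 := by
      have h31 : wY ≫ (shiftFunctor D (1:ℤ)).map (q ≫ u) = 0 :=
        comp_distTriang_mor_zero₃₁ _ hTY
      rw [Category.assoc, h31, comp_zero]
    obtain ⟨gC, hgC⟩ := Triangle.coyoneda_exact₂ _
      (rot_of_distTriang _ (rot_of_distTriang _ hBA))
      ((ψ ≫ wY) ≫ (shiftFunctor D (1:ℤ)).map q)
      (by dsimp [Triangle.mk, Triangle.rotate, Triangle.invRotate]
          rw [Preadditive.comp_neg, Category.assoc, ← Functor.map_comp, hβφ, neg_zero]; rfl)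
    have hgC0 : gC = 0 := hrs_zero_of_lt t (show (0:ℤ) < 1 by omega) hZLE hC gC
    have hβq : (ψ ≫ wY) ≫ (shiftFunctor D (1:ℤ)).map q = 0 := by
      erw [hgC, hgC0, zero_comp]; rfl
    have hθi : ((ψ ≫ wY) ≫ (shiftFunctor D (1:ℤ)).map g₁) ≫ (shiftFunctor D (1:ℤ)).map i
        = 0 := by
      rw [Category.assoc, ← Functor.map_comp, hq2, Functor.map_comp, ← Category.assoc]
      rw [hβq, zero_comp]
    obtain ⟨ρ, hρ⟩ := Triangle.coyoneda_exact₂ _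
      (rot_of_distTriang _ (rot_of_distTriang _ hTt))
      ((ψ ≫ wY) ≫ (shiftFunctor D (1:ℤ)).map g₁)
      (by dsimp [Triangle.mk, Triangle.rotate, Triangle.invRotate]; rw [Preadditive.comp_neg, hθi, neg_zero]; rfl)
    have hρ0 : ρ = 0 := hZF b hb ρ
    have hθ : (ψ ≫ wY) ≫ (shiftFunctor D (1:ℤ)).map g₁ = 0 := by erw [hρ, hρ0, zero_comp]; rfl
    obtain ⟨σ, hσ⟩ := Triangle.coyoneda_exact₂ _
      (rot_of_distTriang _ (rot_of_distTriang _ (rot_of_distTriang _ hT₁)))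
      (ψ ≫ wY) (by dsimp [Triangle.mk, Triangle.rotate, Triangle.invRotate]; rw [Preadditive.comp_neg, hθ, neg_zero]; rfl)
    dsimp [Triangle.mk, Triangle.rotate, Triangle.invRotate] at hσ
    erw [Preadditive.comp_neg] at hσ
    have hσf₁ : σ ≫ (shiftFunctor D (1:ℤ)).map f₁ = -(ψ ≫ wY) := by
      rw [hσ, neg_neg]; rfl
    have hσf₂ : σ ≫ (shiftFunctor D (1:ℤ)).map f₂ = 0 := by
      erw [← hc₁', ← Category.assoc, hσf₁, Preadditive.neg_comp, ← hqc, hβq, neg_zero]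
    obtain ⟨κ, hκ⟩ := Triangle.coyoneda_exact₂ _
      (rot_of_distTriang _ (rot_of_distTriang _ hT₂)) σ
      (by dsimp [Triangle.mk, Triangle.rotate, Triangle.invRotate]; erw [Preadditive.comp_neg, hσf₂, neg_zero]; rfl)
    replace hκ : σ = κ ≫ δ := hκ
    have hκp : κ ≫ p = 0 := hZF b hb _
    obtain ⟨κ', hκ'⟩ := Triangle.coyoneda_exact₂ _ hTt κ hκp
    replace hκ' : κ = κ' ≫ i := hκ'
    have hβ0 : ψ ≫ wY = 0 := by
      have hcomp : (i ≫ δ) ≫ (shiftFunctor D (1:ℤ)).map f₁ = 0 :=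
        comp_distTriang_mor_zero₃₁ _ hT₁
      have hσ0 : σ ≫ (shiftFunctor D (1:ℤ)).map f₁ = 0 := by
        erw [hκ, hκ', Category.assoc, Category.assoc, ← Category.assoc i δ, hcomp,
          comp_zero]
      rw [hσ0] at hσf₁
      exact neg_eq_zero.mp hσf₁.symm
    obtain ⟨α, hα⟩ := Triangle.coyoneda_exact₂ _ (rot_of_distTriang _ hTY) ψ
      (by dsimp [Triangle.mk, Triangle.rotate, Triangle.invRotate]; exact hβ0)
    let α₂ : Z ⟶ A := α
    replace hα : ψ = α₂ ≫ vY := hα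
    have hαv : α₂ ≫ v = 0 := hrs_zero_of_lt t (show (0:ℤ) < 1 by omega) hZLE hC _
    obtain ⟨α₁, hα₁⟩ := Triangle.coyoneda_exact₂ _ hBA α₂ hαv
    let α₃ : Z ⟶ B := α₁
    replace hα₁ : α₂ = α₃ ≫ u := hα₁
    have h3 : (α₃ ≫ g₂) ≫ p = 0 := hZF b hb _
    obtain ⟨βa, hβa⟩ := Triangle.coyoneda_exact₂ _ hTt (α₃ ≫ g₂) h3
    let βa' : Z ⟶ a := βa
    replace hβa : α₃ ≫ g₂ = βa' ≫ i := hβa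
    have hβaε : βa' ≫ (i ≫ δ) = 0 := by
      have h23 : g₂ ≫ δ = 0 := comp_distTriang_mor_zero₂₃ _ hT₂
      rw [← Category.assoc, ← hβa, Category.assoc, h23, comp_zero]
    obtain ⟨ξ₀, hξ₀⟩ := Triangle.coyoneda_exact₂ _ (rot_of_distTriang _ hT₁) βa'
      (by dsimp [Triangle.mk, Triangle.rotate, Triangle.invRotate]; exact hβaε)
    let ξ : Z ⟶ X := ξ₀
    replace hξ₀ : βa' = ξ ≫ g₁ := hξ₀
    have h4 : (α₃ - ξ ≫ q) ≫ g₂ = 0 := by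
      rw [Preadditive.sub_comp, Category.assoc, ← hq2, ← Category.assoc, ← hξ₀, ← hβa,
        sub_self]
    obtain ⟨η, hη⟩ := Triangle.coyoneda_exact₂ _ hT₂ _ h4
    let η' : Z ⟶ B' := η
    replace hη : α₃ - ξ ≫ q = η' ≫ f₂ := hη
    have hα₃ : α₃ = (ξ + η' ≫ f₁) ≫ q := by
      rw [Preadditive.add_comp, Category.assoc, hq1, ← hη]
      abel
    have h12 : (q ≫ u) ≫ vY = 0 := comp_distTriang_mor_zero₁₂ _ hTY
    rw [hα, hα₁, hα₃, Category.assoc, Category.assoc, ← Category.assoc q u vY, h12,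
      comp_zero]
  exact ⟨X, Y, hXP, hYQ, q ≫ u, vY, wY, hTY⟩

/-- The tilted t-structure. -/
def hrsTilt (t : TStructure D) (T F : Set D) (htf : IsHeartTorsionPair t T F) :
    TStructure D where
  le n X := X⟦n⟧ ∈ hrsP t F
  ge n X := X⟦n - 1⟧ ∈ hrsQ t F
  le_isClosedUnderIsomorphisms n := ⟨fun e hX => hrsP_iso ((shiftFunctor D n).mapIso e) hX⟩
  ge_isClosedUnderIsomorphisms n := ⟨fun e hX => hrsQ_iso ((shiftFunctor D (n-1)).mapIso e) hX⟩
  le_shift n a n' hn X hX :=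
    hrsP_iso ((shiftFunctorAdd' D a n' n hn).app X) hX
  ge_shift n a n' hn X hX :=
    hrsQ_iso ((shiftFunctorAdd' D a (n' - 1) (n - 1) (by omega)).app X) hX
  zero' {X Y} f hX hY := by
    change (shiftFunctor D ((1:ℤ)-1)).obj Y ∈ hrsQ t F at hY
    rw [show ((1:ℤ)-1) = 0 by omega] at hY
    have h0 : (shiftFunctor D (0:ℤ)).map f = 0 := hY _ hX _
    exact (shiftFunctor D (0:ℤ)).map_injective (by simpa using h0)
  le_zero_le X hX := by
    change (shiftFunctor D (1:ℤ)).obj X ∈ hrsP t F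
    have hX' : X ∈ hrsP t F := hrsP_iso ((shiftFunctorZero D ℤ).app X) hX
    exact hrsP_shift htf.subset_F hX'
  ge_one_le X hX := by
    change (shiftFunctor D ((1:ℤ)-1)).obj X ∈ hrsQ t F at hX
    rw [show ((1:ℤ)-1) = 0 by omega] at hX
    change (shiftFunctor D ((0:ℤ)-1)).obj X ∈ hrsQ t F
    rw [show ((0:ℤ)-1) = -1 by omega]
    have hX' : X ∈ hrsQ t F := hrsQ_iso ((shiftFunctorZero D ℤ).app X) hX
    exact hrsQ_shift_neg htf.subset_F hX'
  exists_triangle_zero_one A := by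
    obtain ⟨X, Y, hX, hY, f, g, h, hT⟩ := hrs_exists_tri htf A
    refine ⟨X, Y, hrsP_iso ((shiftFunctorZero D ℤ).symm.app X) hX, ?_, f, g, h, hT⟩
    change (shiftFunctor D ((1:ℤ)-1)).obj Y ∈ hrsQ t F
    rw [show ((1:ℤ)-1) = 0 by omega]
    exact hrsQ_iso ((shiftFunctorZero D ℤ).symm.app Y) hY

end HRSHelpers

/-- The Happel–Reiten–Smalø tilt of the heart of a bounded t-structure at a torsion pair
`(T, F)` is the heart of a bounded t-structure. -/
theorem stmt7 (t : TStructure D) (ht : TStructureIsBounded t) (T F : Set D)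
    (htf : IsHeartTorsionPair t T F) :
    ∃ t' : TStructure D, TStructureIsBounded t' ∧ heartSet t' = tiltSet T F := by
  refine ⟨hrsTilt t T F htf, ?_, ?_⟩
  · intro X
    obtain ⟨a, b, hga, hlb⟩ := ht X
    refine ⟨a, b + 1, ?_, ?_⟩
    · intro Z hZ φ
      exact hrs_zero_of_lt t (show (0:ℤ) < 1 by omega) hZ.1
        (t.ge_shift a (a-1) 1 (by omega) X hga) φ
    · have hle : t.le (-1) (X⟦b + 1⟧) := t.le_shift b (b+1) (-1) (by omega) X hlb
      exact ⟨t.le_monotone (show (-1:ℤ) ≤ 0 by omega) _ hle,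
        fun f hf φ => hrs_zero_of_lt t (show (-1:ℤ) < 0 by omega) hle (htf.subset_F hf).2 φ⟩
  · ext x
    constructor
    · rintro ⟨hle, hge⟩
      have hP : x ∈ hrsP t F := hrsP_iso ((shiftFunctorZero D ℤ).app x) hle
      have hQ : x⟦(-1:ℤ)⟧ ∈ hrsQ t F := by
        change (shiftFunctor D ((0:ℤ)-1)).obj x ∈ hrsQ t F at hge
        rwa [show ((0:ℤ)-1) = -1 by omega] at hge
      -- x ∈ D^{≥ -1}
      have hxGE : t.ge (-1) x := by
        refine hrs_ge_of_orth t (-1) x (fun W hW f => ?_)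
        rw [show ((-1:ℤ)-1) = -2 by omega] at hW
        have hW1 : t.le (-1) (W⟦(-1:ℤ)⟧) := t.le_shift (-2) (-1) (-1) (by omega) W hW
        have hWP : W⟦(-1:ℤ)⟧ ∈ hrsP t F :=
          ⟨t.le_monotone (show (-1:ℤ) ≤ 0 by omega) _ hW1,
           fun ff hf φ => hrs_zero_of_lt t (show (-1:ℤ) < 0 by omega) hW1
             (htf.subset_F hf).2 φ⟩
        have h0 : (shiftFunctor D (-1:ℤ)).map f = 0 := hQ _ hWP _
        exact (shiftFunctor D (-1:ℤ)).map_injective (by simpa using h0)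
      obtain ⟨B', h₀, hB', hh₀GE, f₀, g₀, δ₀, hT₀⟩ := t.exists_triangle x (-1) 0 (by omega)
      have hB'1 : t.le (-2) (B'⟦(1:ℤ)⟧) := t.le_shift (-1) 1 (-2) (by omega) B' hB'
      have hh₀LE : t.le 0 h₀ := hrs_le_ext t 0 _ (rot_of_distTriang _ hT₀) hP.1
        (t.le_monotone (show (-2:ℤ) ≤ 0 by omega) _ hB'1)
      have hB'GE : t.ge (-1) B' := hrs_ge_ext t (-1) _ (inv_rot_of_distTriang _ hT₀)
        (t.ge_antitone (show (-1:ℤ) ≤ 1 by omega) _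
          (t.ge_shift 0 (-1) 1 (by omega) h₀ hh₀GE)) hxGE
      have hh₁heart : B'⟦(-1:ℤ)⟧ ∈ heartSet t :=
        ⟨t.le_shift (-1) (-1) 0 (by omega) B' hB', t.ge_shift (-1) (-1) 0 (by omega) B' hB'GE⟩
      obtain ⟨a, b, ha, hb, i, p, wb, hTt⟩ := htf.decomp h₀ ⟨hh₀LE, hh₀GE⟩
      obtain ⟨a₁, b₁, ha₁, hb₁, i₁, p₁, wb₁, hTt₁⟩ := htf.decomp _ hh₁heart
      have hp : p = 0 := by
        obtain ⟨g, hg⟩ := Triangle.yoneda_exact₂ _ (rot_of_distTriang _ hT₀) p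
          (hP.2 b hb _)
        have hg0 : g = 0 := hrs_zero_of_lt t (show (-2:ℤ) < 0 by omega) hB'1
          (htf.subset_F hb).2 g
        rw [hg, hg0, comp_zero]; rfl
      have hbzero : IsZero b := by
        rw [IsZero.iff_id_eq_zero]
        obtain ⟨r, hr⟩ := Triangle.yoneda_exact₃ _ hTt (𝟙 b)
          (by dsimp [Triangle.mk, Triangle.rotate, Triangle.invRotate]; rw [Category.comp_id]; exact hp)
        have hr0 : r = 0 := hrs_zero_of_lt t (show (-1:ℤ) < 0 by omega)
          (t.le_shift 0 1 (-1) (by omega) a (htf.subset_T ha).1) (htf.subset_F hb).2 r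
        rw [hr, hr0, comp_zero]; rfl
      have hizo : IsIso i := (Triangle.isZero₃_iff_isIso₁ _ hTt).1 hbzero
      have hT4 := inv_rot_of_distTriang _ (inv_rot_of_distTriang _ (inv_rot_of_distTriang _
        (inv_rot_of_distTriang _ hT₀)))
      have hhomA : ∀ φ : a₁ ⟶ B'⟦(-1:ℤ)⟧, φ = 0 := by
        intro φ
        have hφm : φ ≫ ((Triangle.mk f₀ g₀ δ₀).invRotate.invRotate.invRotate.invRotate).mor₂
            = 0 := hQ _ (hrsT_sub htf ha₁) _
        obtain ⟨g, hg⟩ := Triangle.coyoneda_exact₂ _ hT4 φ hφm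
        have hg0 : g = 0 := hrs_zero_of_lt t (show (0:ℤ) < 2 by omega) (htf.subset_T ha₁).1
          (t.ge_shift 1 (-1) 2 (by omega) _ (t.ge_shift 0 (-1) 1 (by omega) h₀ hh₀GE)) g
        rw [hg, hg0, zero_comp]; rfl
      have ha₁zero : IsZero a₁ := by
        rw [IsZero.iff_id_eq_zero]
        obtain ⟨r, hr⟩ := Triangle.coyoneda_exact₂ _ (inv_rot_of_distTriang _ hTt₁) (𝟙 a₁)
          (by dsimp [Triangle.mk, Triangle.rotate, Triangle.invRotate]; rw [Category.id_comp]; exact hhomA i₁)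
        have hr0 : r = 0 := hrs_zero_of_lt t (show (0:ℤ) < 1 by omega)
          (htf.subset_T ha₁).1
          (t.ge_shift 0 (-1) 1 (by omega) b₁ (htf.subset_F hb₁).2) r
        rw [hr, hr0, zero_comp]; rfl
      have hp₁iso : IsIso p₁ := (Triangle.isZero₁_iff_isIso₂ _ hTt₁).1 ha₁zero
      let e₁ : b₁⟦(1:ℤ)⟧ ≅ B' := (shiftFunctor D (1:ℤ)).mapIso (asIso p₁).symm ≪≫
        (shiftEquiv D (1:ℤ)).counitIso.app B'
      let e₃ : a ≅ h₀ := asIso i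
      refine ⟨b₁, a, hb₁, ha, e₁.hom ≫ f₀, g₀ ≫ e₃.inv,
        e₃.hom ≫ δ₀ ≫ (shiftFunctor D (1:ℤ)).map e₁.inv, ?_⟩
      refine isomorphic_distinguished _ hT₀ _ ?_
      refine Triangle.isoMk _ _ e₁ (Iso.refl x) e₃ ?_ ?_ ?_
      · dsimp; simp; erw [Category.comp_id]; rfl
      · dsimp [e₃]; simp; exact (by simp : (g₀ ≫ inv i) ≫ i = 𝟙 x ≫ g₀)
      · dsimp [Triangle.mk]; simp [← Functor.map_comp]
    · rintro ⟨yF, yT, hyF, hyT, α, β, γ, hTr⟩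
      have hyF1 : t.le (-1) (yF⟦(1:ℤ)⟧) := t.le_shift 0 1 (-1) (by omega) yF
        (htf.subset_F hyF).1
      constructor
      · refine hrsP_iso ((shiftFunctorZero D ℤ).symm.app x) ⟨?_, ?_⟩
        · exact hrs_le_ext t 0 _ hTr
            (t.le_monotone (show (-1:ℤ) ≤ 0 by omega) _ hyF1) (htf.subset_T hyT).1
        · intro f hf φ
          obtain ⟨g, hg⟩ := Triangle.yoneda_exact₂ _ hTr φ
            (hrs_zero_of_lt t (show (-1:ℤ) < 0 by omega) hyF1 (htf.subset_F hf).2 _)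
          erw [hg, htf.hom_zero hyT hf g, comp_zero]; rfl
      · change (shiftFunctor D ((0:ℤ)-1)).obj x ∈ hrsQ t F
        rw [show ((0:ℤ)-1) = -1 by omega]
        intro Z hZ φ
        have hZ1 : t.le (-1) (Z⟦(1:ℤ)⟧) := t.le_shift 0 1 (-1) (by omega) Z hZ.1
        set φ' : Z⟦(1:ℤ)⟧ ⟶ x :=
          (shiftFunctor D (1:ℤ)).map φ ≫ ((shiftEquiv D (1:ℤ)).counitIso.app x).hom with hφ'
        have hφ'β : φ' ≫ β = 0 := hrs_zero_of_lt t (show (-1:ℤ) < 0 by omega) hZ1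
          (htf.subset_T hyT).2 _
        obtain ⟨ψ0, hψ0⟩ := Triangle.coyoneda_exact₂ _ hTr φ' hφ'β
        have hψ00 : ψ0 = 0 := by
          have h5 : (shiftFunctor D (1:ℤ)).preimage ψ0 = 0 := hZ.2 yF hyF _
          rw [← Functor.map_preimage (shiftFunctor D (1:ℤ)) ψ0, h5, Functor.map_zero]; rfl
        have hφ'0 : φ' = 0 := by
          replace hψ0 : φ' = ψ0 ≫ α := hψ0
          erw [hψ0, hψ00, zero_comp]
        rw [hφ'] at hφ'0
        have h6 := hφ'0 =≫ ((shiftEquiv D (1:ℤ)).counitIso.app x).inv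
        simp only [Category.assoc, Iso.hom_inv_id, Category.comp_id, zero_comp] at h6
        exact (shiftFunctor D (1:ℤ)).map_injective (by erw [Category.assoc, Iso.hom_inv_id, Category.comp_id] at h6; rw [Functor.map_zero]; exact h6)
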